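/- Let Ω ⊆ ℝ be a nonempty open set, k a nonnegative integer, and T : C^k(Ω) → C(Ω) an operator that is localized on intervals (if J ⊆ Ω is open and f₁, f₂ ∈ C^k(Ω) coincide on J, then T(f₁) and T(f₂) coincide on J). Then there exists a function F : Ω × ℝ^{k+1} → ℝ such that (Tf)(x) = F(x, f(x), f'(x), …, f^{(k)}(x)) for all x ∈ Ω and all f ∈ C^k(Ω). -/

import Mathlib

open Set Filter Topology

/-- Gluing at a point: if `f` and `g` have matching values and derivatives at `x`,
the glued function has the common derivative at `x`. -/
lemma glue_hasDerivAt {f g : ℝ → ℝ} {x d : ℝ} (hf : HasDerivAt f d x) (hg : HasDerivAt g d x)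
    (hfg : f x = g x) :
    HasDerivAt (fun y => if y ≤ x then f y else g y) d x := by
  have h1 : HasDerivWithinAt (fun y => if y ≤ x then f y else g y) d (Iic x) x := by
    refine (hf.hasDerivWithinAt).congr (fun y hy => ?_) ?_
    · simp [if_pos (mem_Iic.1 hy)]
    · simp
  have h2 : HasDerivWithinAt (fun y => if y ≤ x then f y else g y) d (Ioi x) x := by
    refine (hg.hasDerivWithinAt).congr (fun y hy => ?_) ?_
    · simp [if_neg (not_le.2 (mem_Ioi.1 hy))]
    · simp [hfg]
  have := h1.union h2
  rwa [Iic_union_Ioi, hasDerivWithinAt_univ] at this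

lemma glue_continuousAt {f g : ℝ → ℝ} {x : ℝ} (hf : ContinuousAt f x) (hg : ContinuousAt g x)
    (hfg : f x = g x) :
    ContinuousAt (fun y => if y ≤ x then f y else g y) x := by
  have h1 : ContinuousWithinAt (fun y => if y ≤ x then f y else g y) (Iic x) x := by
    refine (hf.continuousWithinAt).congr (fun y hy => ?_) ?_
    · simp [if_pos (mem_Iic.1 hy)]
    · simp
  have h2 : ContinuousWithinAt (fun y => if y ≤ x then f y else g y) (Ioi x) x := by
    refine (hg.continuousWithinAt).congr (fun y hy => ?_) ?_
    · simp [if_neg (not_le.2 (mem_Ioi.1 hy))]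
    · simp [hfg]
  have := h1.union h2
  rwa [Iic_union_Ioi, continuousWithinAt_univ] at this

lemma glue_eventuallyEq_left {f g : ℝ → ℝ} {x y : ℝ} (hy : y < x) :
    (fun z => if z ≤ x then f z else g z) =ᶠ[𝓝 y] f := by
  filter_upwards [Iio_mem_nhds hy] with z hz
  simp [le_of_lt (mem_Iio.1 hz)]

lemma glue_eventuallyEq_right {f g : ℝ → ℝ} {x y : ℝ} (hy : x < y) :
    (fun z => if z ≤ x then f z else g z) =ᶠ[𝓝 y] g := by
  filter_upwards [Ioi_mem_nhds hy] with z hz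
  simp [not_le.2 (mem_Ioi.1 hz)]

/-- Gluing two `C^n` functions at a point where their `n`-jets agree produces a
`C^n` function on an open set. -/
lemma glue_contDiffOn {Ω : Set ℝ} (hΩ : IsOpen Ω) {x : ℝ} (hx : x ∈ Ω) :
    ∀ n : ℕ, ∀ f g : ℝ → ℝ, ContDiffOn ℝ n f Ω → ContDiffOn ℝ n g Ω →
      (∀ i ≤ n, iteratedDeriv i f x = iteratedDeriv i g x) →
      ContDiffOn ℝ n (fun y => if y ≤ x then f y else g y) Ω := by
  intro n
  induction n with
  | zero =>
    intro f g hf hg hjet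
    simp only [Nat.cast_zero, contDiffOn_zero] at hf hg ⊢
    intro y hy
    rcases lt_trichotomy y x with h | h | h
    · exact ((hf.continuousAt (hΩ.mem_nhds hy)).congr
        (glue_eventuallyEq_left h).symm).continuousWithinAt
    · subst h
      have := glue_continuousAt (hf.continuousAt (hΩ.mem_nhds hy))
        (hg.continuousAt (hΩ.mem_nhds hy)) (by simpa using hjet 0 le_rfl)
      exact this.continuousWithinAt
    · exact ((hg.continuousAt (hΩ.mem_nhds hy)).congr
        (glue_eventuallyEq_right h).symm).continuousWithinAt
  | succ n ih =>
    intro f g hf hg hjet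
    have hone : (1 : WithTop ℕ∞) ≤ (n + 1 : ℕ) := by
      exact_mod_cast Nat.one_le_iff_ne_zero.2 (Nat.succ_ne_zero n)
    have hfd : ∀ y ∈ Ω, HasDerivAt f (deriv f y) y := fun y hy =>
      ((hf.contDiffAt (hΩ.mem_nhds hy)).differentiableAt (by exact_mod_cast Nat.succ_ne_zero n)).hasDerivAt
    have hgd : ∀ y ∈ Ω, HasDerivAt g (deriv g y) y := fun y hy =>
      ((hg.contDiffAt (hΩ.mem_nhds hy)).differentiableAt (by exact_mod_cast Nat.succ_ne_zero n)).hasDerivAt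
    have hd1 : deriv f x = deriv g x := by
      have := hjet 1 (by omega)
      simpa [iteratedDeriv_one] using this
    have key : ∀ y ∈ Ω, HasDerivAt (fun z => if z ≤ x then f z else g z)
        (if y ≤ x then deriv f y else deriv g y) y := by
      intro y hy
      rcases lt_trichotomy y x with h | h | h
      · rw [if_pos h.le]
        exact (hfd y hy).congr_of_eventuallyEq (glue_eventuallyEq_left h)
      · subst h
        rw [if_pos le_rfl]
        refine glue_hasDerivAt (hfd y hy) ?_ (by simpa using hjet 0 (by omega))
        rw [hd1]; exact hgd y hy
      · rw [if_neg (not_le.2 h)]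
        exact (hgd y hy).congr_of_eventuallyEq (glue_eventuallyEq_right h)
    have hjet' : ∀ i ≤ n, iteratedDeriv i (deriv f) x = iteratedDeriv i (deriv g) x := by
      intro i hi
      have := hjet (i + 1) (by omega)
      rwa [iteratedDeriv_succ', iteratedDeriv_succ'] at this
    have hdf : ContDiffOn ℝ n (deriv f) Ω := hf.deriv_of_isOpen hΩ le_rfl
    have hdg : ContDiffOn ℝ n (deriv g) Ω := hg.deriv_of_isOpen hΩ le_rfl
    have hglued := ih (deriv f) (deriv g) hdf hdg hjet'
    rw [show ((n + 1 : ℕ) : WithTop ℕ∞) = (n : WithTop ℕ∞) + 1 by push_cast; ring,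
      contDiffOn_succ_iff_deriv_of_isOpen hΩ]
    refine ⟨fun y hy => ((key y hy).differentiableAt).differentiableWithinAt,
      by simp, ?_⟩
    exact hglued.congr fun y hy => (key y hy).deriv

/-- If `T : C^k(Ω) → C(Ω)` is localized on intervals, then there is a function
`F : Ω × ℝ^{k+1} → ℝ` (here defined on all of `ℝ × ℝ^{k+1}`) such that
`(Tf)(x) = F(x, f(x), f'(x), …, f^{(k)}(x))` for all `x ∈ Ω` and `f ∈ C^k(Ω)`. -/
theorem statement8 (Ω : Set ℝ) (hΩ : IsOpen Ω) (hΩne : Ω.Nonempty) (k : ℕ)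
    (T : (ℝ → ℝ) → (ℝ → ℝ))
    (hmap : ∀ f : ℝ → ℝ, ContDiffOn ℝ k f Ω → ContinuousOn (T f) Ω)
    (hloc : ∀ J : Set ℝ, IsOpen J → J ⊆ Ω →
      ∀ f₁ f₂ : ℝ → ℝ, ContDiffOn ℝ k f₁ Ω → ContDiffOn ℝ k f₂ Ω →
        Set.EqOn f₁ f₂ J → Set.EqOn (T f₁) (T f₂) J) :
    ∃ F : ℝ → (Fin (k + 1) → ℝ) → ℝ,
      ∀ f : ℝ → ℝ, ContDiffOn ℝ k f Ω → ∀ x ∈ Ω,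
        T f x = F x (fun i => iteratedDeriv i f x) := by
  -- Step 1: well-definedness: same jet at x implies same value of T at x.
  have wd : ∀ f g : ℝ → ℝ, ContDiffOn ℝ k f Ω → ContDiffOn ℝ k g Ω → ∀ x ∈ Ω,
      (∀ i ≤ k, iteratedDeriv i f x = iteratedDeriv i g x) → T f x = T g x := by
    intro f g hf hg x hx hjet
    set h : ℝ → ℝ := fun y => if y ≤ x then f y else g y with hh
    have hhC : ContDiffOn ℝ k h Ω := glue_contDiffOn hΩ hx k f g hf hg hjet
    obtain ⟨ε, hε, hball⟩ := Metric.isOpen_iff.1 hΩ x hx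
    -- left side
    have hfx : T f x = T h x := by
      have hEq : Set.EqOn (T f) (T h) (Ω ∩ Iio x) :=
        hloc (Ω ∩ Iio x) (hΩ.inter isOpen_Iio) (inter_subset_left) f h hf hhC
          (fun y hy => by simp [hh, le_of_lt (mem_Iio.1 hy.2)])
      have hsub : Ioo (x - ε) x ⊆ Ω ∩ Iio x := by
        intro y hy
        refine ⟨hball ?_, hy.2⟩
        rw [Metric.mem_ball, Real.dist_eq, abs_lt]
        constructor <;> [linarith [hy.1]; linarith [hy.2]]
      have hne : (𝓝[Ω ∩ Iio x] x).NeBot := by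
        have h0 : (𝓝[Ioo (x - ε) x] x).NeBot := by
          refine mem_closure_iff_nhdsWithin_neBot.1 ?_
          rw [closure_Ioo (by linarith : x - ε ≠ x)]
          exact ⟨by linarith, le_rfl⟩
        exact h0.mono (nhdsWithin_mono x hsub)
      have h1 : Tendsto (T f) (𝓝[Ω ∩ Iio x] x) (𝓝 (T f x)) :=
        ((hmap f hf x hx).mono inter_subset_left)
      have h2 : Tendsto (T h) (𝓝[Ω ∩ Iio x] x) (𝓝 (T h x)) :=
        ((hmap h hhC x hx).mono inter_subset_left)
      have h1' : Tendsto (T h) (𝓝[Ω ∩ Iio x] x) (𝓝 (T f x)) :=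
        h1.congr' (by filter_upwards [self_mem_nhdsWithin] with y hy using hEq hy)
      exact tendsto_nhds_unique h1' h2
    have hgx : T g x = T h x := by
      have hEq : Set.EqOn (T g) (T h) (Ω ∩ Ioi x) :=
        hloc (Ω ∩ Ioi x) (hΩ.inter isOpen_Ioi) (inter_subset_left) g h hg hhC
          (fun y hy => by simp [hh, not_le.2 (mem_Ioi.1 hy.2)])
      have hsub : Ioo x (x + ε) ⊆ Ω ∩ Ioi x := by
        intro y hy
        refine ⟨hball ?_, hy.1⟩
        rw [Metric.mem_ball, Real.dist_eq, abs_lt]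
        constructor <;> [linarith [hy.1]; linarith [hy.2]]
      have hne : (𝓝[Ω ∩ Ioi x] x).NeBot := by
        have h0 : (𝓝[Ioo x (x + ε)] x).NeBot := by
          refine mem_closure_iff_nhdsWithin_neBot.1 ?_
          rw [closure_Ioo (by linarith : x ≠ x + ε)]
          exact ⟨le_rfl, by linarith⟩
        exact h0.mono (nhdsWithin_mono x hsub)
      have h1 : Tendsto (T g) (𝓝[Ω ∩ Ioi x] x) (𝓝 (T g x)) :=
        ((hmap g hg x hx).mono inter_subset_left)
      have h2 : Tendsto (T h) (𝓝[Ω ∩ Ioi x] x) (𝓝 (T h x)) :=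
        ((hmap h hhC x hx).mono inter_subset_left)
      have h1' : Tendsto (T h) (𝓝[Ω ∩ Ioi x] x) (𝓝 (T g x)) :=
        h1.congr' (by filter_upwards [self_mem_nhdsWithin] with y hy using hEq hy)
      exact tendsto_nhds_unique h1' h2
    rw [hfx, hgx]
  -- Step 2: define F by choice.
  classical
  refine ⟨fun x v => if hex : ∃ f : ℝ → ℝ, ContDiffOn ℝ k f Ω ∧ x ∈ Ω ∧
      (∀ i : Fin (k + 1), iteratedDeriv i f x = v i) then T hex.choose x else 0, ?_⟩
  intro f hf x hx
  have hex : ∃ g : ℝ → ℝ, ContDiffOn ℝ k g Ω ∧ x ∈ Ω ∧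
      (∀ i : Fin (k + 1), iteratedDeriv i g x = iteratedDeriv i f x) :=
    ⟨f, hf, hx, fun i => rfl⟩
  show T f x = dite _ _ _
  rw [dif_pos hex]
  obtain ⟨hgC, -, hgjet⟩ := hex.choose_spec
  exact (wd hex.choose f hgC hf x hx fun i hi => hgjet ⟨i, by omega⟩).symm
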